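/- For every finitely supported family (α_k)_{k ∈ ℤ} of complex numbers, the bilinear product on the Witt algebra W defined on basis elements by e_i · e_j = Σ_{k ∈ ℤ} α_k e_{i+j+k} is commutative and associative and satisfies the compatibility condition 2 z·[x,y] = [z·x, y] + [x, z·y] for all x, y, z ∈ W; hence every mutation of the Laurent polynomial algebra gives a transposed Poisson structure whose Lie part is the Witt algebra. -/

import Mathlib

/-- The Witt algebra bracket on the space `ℤ →₀ ℂ` with basis `e i = single i 1`,
given by `[e i, e j] = (i - j) e (i+j)`. -/
noncomputable def wittBracket (f g : ℤ →₀ ℂ) : ℤ →₀ ℂ :=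
  f.sum fun i a => g.sum fun j b =>
    (a * b * ((i : ℂ) - (j : ℂ))) • Finsupp.single (i + j) (1 : ℂ)

/-- The basis element `e i` of the Witt algebra. -/
noncomputable def we (i : ℤ) : ℤ →₀ ℂ := Finsupp.single i 1

/-- The mutation product on the Witt algebra determined by a finitely supported
family `α`, defined by `e_i · e_j = Σ_k α_k e_{i+j+k}` and extended bilinearly. -/
noncomputable def wittMul (α : ℤ →₀ ℂ) (f g : ℤ →₀ ℂ) : ℤ →₀ ℂ :=
  f.sum fun i a => g.sum fun j b => α.sum fun k c =>
    (a * b * c) • Finsupp.single (i + j + k) (1 : ℂ)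

section Aux

lemma wittBracket_add_left (f g h : ℤ →₀ ℂ) :
    wittBracket (f + g) h = wittBracket f h + wittBracket g h := by
  simp only [wittBracket]
  rw [Finsupp.sum_add_index']
  · intro i; simp
  · intro i b1 b2
    rw [← Finsupp.sum_add]
    refine Finsupp.sum_congr fun j _ => ?_
    rw [← add_smul]; congr 1; ring

lemma wittBracket_add_right (f g h : ℤ →₀ ℂ) :
    wittBracket f (g + h) = wittBracket f g + wittBracket f h := by
  simp only [wittBracket]
  rw [← Finsupp.sum_add]
  refine Finsupp.sum_congr fun i _ => ?_
  rw [Finsupp.sum_add_index']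
  · intro j; simp
  · intro j b1 b2
    rw [← add_smul]; congr 1; ring

lemma wittBracket_smul_left (c : ℂ) (f g : ℤ →₀ ℂ) :
    wittBracket (c • f) g = c • wittBracket f g := by
  simp only [wittBracket]
  rw [Finsupp.smul_sum, Finsupp.sum_smul_index']
  · refine Finsupp.sum_congr fun i _ => ?_
    rw [Finsupp.smul_sum]
    refine Finsupp.sum_congr fun j _ => ?_
    rw [smul_smul]; congr 1; simp only [smul_eq_mul]; ring
  · intro i; simp

lemma wittBracket_smul_right (c : ℂ) (f g : ℤ →₀ ℂ) :
    wittBracket f (c • g) = c • wittBracket f g := by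
  simp only [wittBracket]
  rw [Finsupp.smul_sum]
  refine Finsupp.sum_congr fun i _ => ?_
  rw [Finsupp.smul_sum, Finsupp.sum_smul_index']
  · refine Finsupp.sum_congr fun j _ => ?_
    rw [smul_smul]; congr 1; simp only [smul_eq_mul]; ring
  · intro j; simp

lemma wittBracket_zero_left (g : ℤ →₀ ℂ) : wittBracket 0 g = 0 := by simp [wittBracket]
lemma wittBracket_zero_right (f : ℤ →₀ ℂ) : wittBracket f 0 = 0 := by simp [wittBracket]

lemma wittBracket_single_single (i j : ℤ) (a b : ℂ) :
    wittBracket (Finsupp.single i a) (Finsupp.single j b) =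
      (a * b * ((i : ℂ) - (j : ℂ))) • Finsupp.single (i + j) (1 : ℂ) := by
  simp only [wittBracket]
  rw [Finsupp.sum_single_index, Finsupp.sum_single_index] <;> simp

lemma wittBracket_sum_left (h : ℤ →₀ ℂ) (g : ℤ → ℂ → (ℤ →₀ ℂ)) (s : ℤ →₀ ℂ) :
    wittBracket (h.sum g) s = h.sum fun k c => wittBracket (g k c) s :=
  map_finsuppSum (AddMonoidHom.mk ⟨fun f => wittBracket f s, wittBracket_zero_left s⟩
    (fun f g' => wittBracket_add_left f g' s)) h g

lemma wittBracket_sum_right (h : ℤ →₀ ℂ) (g : ℤ → ℂ → (ℤ →₀ ℂ)) (s : ℤ →₀ ℂ) :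
    wittBracket s (h.sum g) = h.sum fun k c => wittBracket s (g k c) :=
  map_finsuppSum (AddMonoidHom.mk ⟨fun f => wittBracket s f, wittBracket_zero_right s⟩
    (fun f g' => wittBracket_add_right s f g')) h g

lemma wittMul_add_left (α f g h : ℤ →₀ ℂ) :
    wittMul α (f + g) h = wittMul α f h + wittMul α g h := by
  simp only [wittMul]
  rw [Finsupp.sum_add_index']
  · intro i; simp
  · intro i b1 b2
    rw [← Finsupp.sum_add]
    refine Finsupp.sum_congr fun j _ => ?_
    rw [← Finsupp.sum_add]
    refine Finsupp.sum_congr fun k _ => ?_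
    rw [← add_smul]; congr 1; ring

lemma wittMul_add_right (α f g h : ℤ →₀ ℂ) :
    wittMul α f (g + h) = wittMul α f g + wittMul α f h := by
  simp only [wittMul]
  rw [← Finsupp.sum_add]
  refine Finsupp.sum_congr fun i _ => ?_
  rw [Finsupp.sum_add_index']
  · intro j; simp
  · intro j b1 b2
    rw [← Finsupp.sum_add]
    refine Finsupp.sum_congr fun k _ => ?_
    rw [← add_smul]; congr 1; ring

lemma wittMul_smul_left (α : ℤ →₀ ℂ) (c : ℂ) (f g : ℤ →₀ ℂ) :
    wittMul α (c • f) g = c • wittMul α f g := by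
  simp only [wittMul]
  rw [Finsupp.smul_sum, Finsupp.sum_smul_index']
  · refine Finsupp.sum_congr fun i _ => ?_
    rw [Finsupp.smul_sum]
    refine Finsupp.sum_congr fun j _ => ?_
    rw [Finsupp.smul_sum]
    refine Finsupp.sum_congr fun k _ => ?_
    rw [smul_smul]; congr 1; simp only [smul_eq_mul]; ring
  · intro i; simp

lemma wittMul_smul_right (α : ℤ →₀ ℂ) (c : ℂ) (f g : ℤ →₀ ℂ) :
    wittMul α f (c • g) = c • wittMul α f g := by
  simp only [wittMul]
  rw [Finsupp.smul_sum]
  refine Finsupp.sum_congr fun i _ => ?_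
  rw [Finsupp.smul_sum, Finsupp.sum_smul_index']
  · refine Finsupp.sum_congr fun j _ => ?_
    rw [Finsupp.smul_sum]
    refine Finsupp.sum_congr fun k _ => ?_
    rw [smul_smul]; congr 1; simp only [smul_eq_mul]; ring
  · intro j; simp

lemma wittMul_zero_left (α g : ℤ →₀ ℂ) : wittMul α 0 g = 0 := by simp [wittMul]
lemma wittMul_zero_right (α f : ℤ →₀ ℂ) : wittMul α f 0 = 0 := by simp [wittMul]

lemma wittMul_single_single (α : ℤ →₀ ℂ) (i j : ℤ) (a b : ℂ) :
    wittMul α (Finsupp.single i a) (Finsupp.single j b) =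
      α.sum fun k c => (a * b * c) • Finsupp.single (i + j + k) (1 : ℂ) := by
  simp only [wittMul]
  rw [Finsupp.sum_single_index, Finsupp.sum_single_index]
  · simp
  · simp

lemma wittMul_sum_left (α h : ℤ →₀ ℂ) (g : ℤ → ℂ → (ℤ →₀ ℂ)) (s : ℤ →₀ ℂ) :
    wittMul α (h.sum g) s = h.sum fun k c => wittMul α (g k c) s :=
  map_finsuppSum (AddMonoidHom.mk ⟨fun f => wittMul α f s, wittMul_zero_left α s⟩
    (fun f g' => wittMul_add_left α f g' s)) h g

lemma wittMul_sum_right (α h : ℤ →₀ ℂ) (g : ℤ → ℂ → (ℤ →₀ ℂ)) (s : ℤ →₀ ℂ) :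
    wittMul α s (h.sum g) = h.sum fun k c => wittMul α s (g k c) :=
  map_finsuppSum (AddMonoidHom.mk ⟨fun f => wittMul α s f, wittMul_zero_right α s⟩
    (fun f g' => wittMul_add_right α s f g')) h g

end Aux

theorem wittMul_gives_transposedPoisson (α : ℤ →₀ ℂ) :
    (∀ i j : ℤ, wittMul α (we i) (we j) = α.sum fun k c => c • we (i + j + k)) ∧
    (∀ x y z : ℤ →₀ ℂ, wittMul α (x + y) z = wittMul α x z + wittMul α y z) ∧
    (∀ (c : ℂ) (x y : ℤ →₀ ℂ), wittMul α (c • x) y = c • wittMul α x y) ∧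
    (∀ x y : ℤ →₀ ℂ, wittMul α x y = wittMul α y x) ∧
    (∀ x y z : ℤ →₀ ℂ, wittMul α (wittMul α x y) z = wittMul α x (wittMul α y z)) ∧
    (∀ x y z : ℤ →₀ ℂ, (2 : ℂ) • wittMul α z (wittBracket x y) =
        wittBracket (wittMul α z x) y + wittBracket x (wittMul α z y)) := by
  refine ⟨?_, fun x y z => wittMul_add_left α x y z, fun c x y => wittMul_smul_left α c x y,
    ?_, ?_, ?_⟩
  · -- value on basis elements
    intro i j
    rw [we, we, wittMul_single_single]
    refine Finsupp.sum_congr fun k _ => ?_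
    rw [we, one_mul, one_mul]
  · -- commutativity
    intro x y
    induction x using Finsupp.induction_linear with
    | zero => rw [wittMul_zero_left, wittMul_zero_right]
    | add f g hf hg => rw [wittMul_add_left, wittMul_add_right, hf, hg]
    | single i a =>
      induction y using Finsupp.induction_linear with
      | zero => rw [wittMul_zero_left, wittMul_zero_right]
      | add f g hf hg => rw [wittMul_add_left, wittMul_add_right, hf, hg]
      | single j b =>
        rw [wittMul_single_single, wittMul_single_single]
        refine Finsupp.sum_congr fun k _ => ?_
        rw [mul_comm b a, add_comm j i]
  · -- associativity
    intro x y z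
    induction x using Finsupp.induction_linear with
    | zero => simp only [wittMul_zero_left, wittMul_zero_right, wittBracket_zero_left, wittBracket_zero_right, smul_zero, add_zero, zero_add]
    | add f g hf hg =>
      simp only [wittMul_add_left, wittMul_add_right, hf, hg]
    | single i a =>
      induction y using Finsupp.induction_linear with
      | zero => simp only [wittMul_zero_left, wittMul_zero_right, wittBracket_zero_left, wittBracket_zero_right, smul_zero, add_zero, zero_add]
      | add f g hf hg =>
        simp only [wittMul_add_left, wittMul_add_right, hf, hg]
      | single j b =>
        induction z using Finsupp.induction_linear with
        | zero => simp only [wittMul_zero_left, wittMul_zero_right, wittBracket_zero_left, wittBracket_zero_right, smul_zero, add_zero, zero_add]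
        | add f g hf hg =>
          simp only [wittMul_add_left, wittMul_add_right, hf, hg]
        | single l d =>
          rw [wittMul_single_single, wittMul_single_single, wittMul_sum_left,
            wittMul_sum_right]
          rw [Finsupp.sum_congr (g2 := fun k c => α.sum fun k' c' =>
              (a * b * c * (1 * d * c')) • Finsupp.single (i + j + k + l + k') (1 : ℂ))
            (fun k _ => by
              rw [wittMul_smul_left, wittMul_single_single, Finsupp.smul_sum]
              exact Finsupp.sum_congr fun k' _ => by rw [smul_smul])]
          conv_rhs => rw [Finsupp.sum_congr (g2 := fun k' c' => α.sum fun k c =>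
              (b * d * c' * (a * 1 * c)) • Finsupp.single (i + (j + l + k') + k) (1 : ℂ))
            (fun k' _ => by
              rw [wittMul_smul_right, wittMul_single_single, Finsupp.smul_sum]
              exact Finsupp.sum_congr fun k _ => by rw [smul_smul])]
          rw [Finsupp.sum_comm]
          refine Finsupp.sum_congr fun k' _ => Finsupp.sum_congr fun k _ => ?_
          rw [show i + (j + l + k') + k = i + j + k + l + k' from by ring]
          congr 1; ring
  · -- transposed Leibniz rule
    intro x y z
    induction x using Finsupp.induction_linear with
    | zero => simp only [wittMul_zero_left, wittMul_zero_right, wittBracket_zero_left, wittBracket_zero_right, smul_zero, add_zero, zero_add]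
    | add f g hf hg =>
      simp only [wittBracket_add_left, wittBracket_add_right, wittMul_add_left,
        wittMul_add_right, smul_add, hf, hg]
      abel
    | single i a =>
      induction y using Finsupp.induction_linear with
      | zero => simp only [wittMul_zero_left, wittMul_zero_right, wittBracket_zero_left, wittBracket_zero_right, smul_zero, add_zero, zero_add]
      | add f g hf hg =>
        simp only [wittBracket_add_left, wittBracket_add_right, wittMul_add_left,
          wittMul_add_right, smul_add, hf, hg]
        abel
      | single j b =>
        induction z using Finsupp.induction_linear with
        | zero => simp only [wittMul_zero_left, wittMul_zero_right, wittBracket_zero_left, wittBracket_zero_right, smul_zero, add_zero, zero_add]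
        | add f g hf hg =>
          simp only [wittBracket_add_left, wittBracket_add_right, wittMul_add_left,
            wittMul_add_right, smul_add, hf, hg]
          abel
        | single l d =>
          rw [wittBracket_single_single, wittMul_smul_right, wittMul_single_single,
            wittMul_single_single, wittMul_single_single, wittBracket_sum_left,
            wittBracket_sum_right, Finsupp.smul_sum, Finsupp.smul_sum, ← Finsupp.sum_add]
          refine Finsupp.sum_congr fun k c => ?_
          rw [wittBracket_smul_left, wittBracket_single_single,
            wittBracket_smul_right, wittBracket_single_single]
          rw [show l + i + k + j = l + (i + j) + k from by ring,
            show i + (l + j + k) = l + (i + j) + k from by ring]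
          simp only [smul_smul, ← add_smul]
          congr 1
          push_cast
          ring
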